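/- Suppose symmetric positive definite matrices X₁, …, X_M and a Metzler matrix Π (off-diagonal entries nonnegative, rows summing to zero) satisfy the Lyapunov-Metzler inequalities A_iᵀ X_i + X_i A_i + ∑_{j≠i} π_{i,j}(X_j − X_i) + Cᵀ C < 0 for all i. If x ≠ 0 and i is such that xᵀ X_i x ≤ xᵀ X_j x for all j, then xᵀ (A_iᵀ X_i + X_i A_i) x < − xᵀ Cᵀ C x. -/

import Mathlib

open Matrix Finset

/-- Lyapunov-Metzler inequalities imply that at a minimizing index `i` of the Lyapunov
functions, the derivative of the active quadratic form is below `-xᵀ Cᵀ C x`. -/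
theorem stmt5 {n p M : ℕ} (A : Fin M → Matrix (Fin n) (Fin n) ℝ)
    (C : Matrix (Fin p) (Fin n) ℝ) (X : Fin M → Matrix (Fin n) (Fin n) ℝ)
    (Pi : Matrix (Fin M) (Fin M) ℝ)
    (hmetz_off : ∀ i j, i ≠ j → 0 ≤ Pi i j)
    (hmetz_row : ∀ i, ∑ j, Pi i j = 0)
    (hXsymm : ∀ i, (X i).IsSymm)
    (hXpos : ∀ i, ∀ v : Fin n → ℝ, v ≠ 0 → 0 < v ⬝ᵥ (X i).mulVec v)
    (hLM : ∀ i, ∀ v : Fin n → ℝ, v ≠ 0 →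
      v ⬝ᵥ ((A i)ᵀ * X i + X i * A i +
        (∑ j ∈ univ.erase i, Pi i j • (X j - X i)) + Cᵀ * C).mulVec v < 0)
    (x : Fin n → ℝ) (hx : x ≠ 0) (i : Fin M)
    (hmin : ∀ j, x ⬝ᵥ (X i).mulVec x ≤ x ⬝ᵥ (X j).mulVec x) :
    x ⬝ᵥ ((A i)ᵀ * X i + X i * A i).mulVec x < -(x ⬝ᵥ (Cᵀ * C).mulVec x) := by
  have h := hLM i x hx
  have hS : 0 ≤ x ⬝ᵥ ((∑ j ∈ univ.erase i, Pi i j • (X j - X i)).mulVec x) := by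
    have hrw : ∀ s : Finset (Fin M),
        x ⬝ᵥ ((∑ j ∈ s, Pi i j • (X j - X i)).mulVec x)
          = ∑ j ∈ s, Pi i j * (x ⬝ᵥ ((X j - X i).mulVec x)) := by
      intro s
      induction s using Finset.induction with
      | empty => simp
      | insert _ _ h ih =>
        rw [Finset.sum_insert h, Finset.sum_insert h, Matrix.add_mulVec,
          dotProduct_add, ih, Matrix.smul_mulVec, dotProduct_smul,
          smul_eq_mul]
    rw [hrw]
    refine Finset.sum_nonneg fun j hj => ?_
    rw [Matrix.sub_mulVec, dotProduct_sub]
    have hij : i ≠ j := fun e => (Finset.mem_erase.mp hj).1 e.symm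
    exact mul_nonneg (hmetz_off i j hij) (sub_nonneg.mpr (hmin j))
  rw [Matrix.add_mulVec, Matrix.add_mulVec, dotProduct_add, dotProduct_add] at h
  linarith
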